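/- Finite range of the averaging operators (Lemma 3.7): If \(\varphi,\psi\in\mathcal{X}_N\) satisfy \(\mathrm{dist}_\infty(\mathrm{supp}\,\varphi,\mathrm{supp}\,\psi)>l-1\), then \(\langle\mathscr{T}\varphi,\psi\rangle=0\), \(\langle\mathscr{T}'\varphi,\psi\rangle=0\), \(\langle\mathscr{R}\varphi,\psi\rangle=0\), and \(\langle\mathscr{R}'\varphi,\psi\rangle=0\). -/

import Mathlib

namespace FRD

/-- The unit lattice vector `e j` in the discrete torus `(ZMod n)^d`. -/
def unitVec (d n : ℕ) (j : Fin d) : Fin d → ZMod n := fun i => if i = j then 1 else 0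

/-- Discrete forward gradient `(∇φ)^r_j(x) = φ^r(x+e_j) - φ^r(x)`. -/
def dGrad {d m : ℕ} (n : ℕ) (φ : (Fin d → ZMod n) → Fin m → ℝ) (x : Fin d → ZMod n) :
    Fin m → Fin d → ℝ :=
  fun r j => φ (x + unitVec d n j) r - φ x r

/-- Standard scalar product on `ℝ^{m×d}`. -/
def ginner {d m : ℕ} (F G : Fin m → Fin d → ℝ) : ℝ := ∑ r, ∑ j, F r j * G r j

/-- Action on `ℝ^{m×d}` of the linear map with coefficient array `A`. -/
def appA {d m : ℕ} (A : Fin m × Fin d → Fin m × Fin d → ℝ) (F : Fin m → Fin d → ℝ) :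
    Fin m → Fin d → ℝ :=
  fun r j => ∑ p : Fin m × Fin d, A (r, j) p * F p.1 p.2

/-- `ℓ²` scalar product `⟨φ,ψ⟩` on the torus. -/
def pairV {d m : ℕ} (n : ℕ) [NeZero n] (φ ψ : (Fin d → ZMod n) → Fin m → ℝ) : ℝ :=
  ∑ x, ∑ r, φ x r * ψ x r

/-- `φ` has zero mean (i.e. `φ ∈ 𝒳_N`). -/
def MeanZero {d m : ℕ} (n : ℕ) [NeZero n] (φ : (Fin d → ZMod n) → Fin m → ℝ) : Prop :=
  ∑ x, φ x = 0

/-- Dirichlet form `(φ,ψ)_+ = ∑_x ⟨A ∇φ(x), ∇ψ(x)⟩`. -/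
def plusForm {d m : ℕ} (n : ℕ) [NeZero n] (A : Fin m × Fin d → Fin m × Fin d → ℝ)
    (φ ψ : (Fin d → ZMod n) → Fin m → ℝ) : ℝ :=
  ∑ x, ginner (appA A (dGrad n φ x)) (dGrad n ψ x)

/-- The elliptic operator `𝒜 = ∇* (A ∇·)`. -/
def opA {d m : ℕ} (n : ℕ) (A : Fin m × Fin d → Fin m × Fin d → ℝ)
    (φ : (Fin d → ZMod n) → Fin m → ℝ) : (Fin d → ZMod n) → Fin m → ℝ :=
  fun x r => ∑ j, (appA A (dGrad n φ (x - unitVec d n j)) r j - appA A (dGrad n φ x) r j)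

/-- The discrete cube `{a,…,b}^d` viewed inside the torus. -/
def box (d n a b : ℕ) : Set (Fin d → ZMod n) :=
  {x | ∀ i, ∃ k : ℕ, a ≤ k ∧ k ≤ b ∧ x i = (k : ZMod n)}

/-- Distance to `0` on `ZMod n`, i.e. `min` over integer lifts of the absolute value. -/
def zdist (n : ℕ) (z : ZMod n) : ℕ := min z.val (n - z.val)

/-- The torus metric `ρ_∞`. -/
def distT {d : ℕ} (n : ℕ) (x y : Fin d → ZMod n) : ℕ :=
  Finset.univ.sup fun i => zdist n (x i - y i)

/-- `P` is the `(·,·)_+`-orthogonal projection of `𝒳_N` onto the subspace `𝓗_+(Q+x)` of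
mean-zero functions vanishing outside `Q + x`, where `Q = {1,…,l-1}^d`. -/
def IsProj {d m : ℕ} (n : ℕ) [NeZero n] (A : Fin m × Fin d → Fin m × Fin d → ℝ) (l : ℕ)
    (x : Fin d → ZMod n)
    (P : ((Fin d → ZMod n) → Fin m → ℝ) → (Fin d → ZMod n) → Fin m → ℝ) : Prop :=
  ∀ φ, MeanZero n φ →
    MeanZero n (P φ) ∧ (∀ y, y - x ∉ box d n 1 (l - 1) → P φ y = 0) ∧
    ∀ ψ, MeanZero n ψ → (∀ y, y - x ∉ box d n 1 (l - 1) → ψ y = 0) →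
      plusForm n A (P φ) ψ = plusForm n A φ ψ

/-- The averaged projection `𝒯 = l^{-d} ∑_x Π_x`. -/
noncomputable def Tavg {d m : ℕ} (n : ℕ) [NeZero n] (l : ℕ)
    (P : (Fin d → ZMod n) → ((Fin d → ZMod n) → Fin m → ℝ) → (Fin d → ZMod n) → Fin m → ℝ)
    (φ : (Fin d → ZMod n) → Fin m → ℝ) : (Fin d → ZMod n) → Fin m → ℝ :=
  ((l : ℝ) ^ d)⁻¹ • ∑ x, P x φ

/-- Translation `τ_a φ = φ(· - a)`. -/
def tau {d m : ℕ} (n : ℕ) (a : Fin d → ZMod n) (φ : (Fin d → ZMod n) → Fin m → ℝ) :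
    (Fin d → ZMod n) → Fin m → ℝ := fun y => φ (y - a)

/-- Convolution operator with matrix-valued kernel `K`. -/
def convK {d m : ℕ} (n : ℕ) [NeZero n] (K : (Fin d → ZMod n) → Fin m → Fin m → ℝ)
    (φ : (Fin d → ZMod n) → Fin m → ℝ) : (Fin d → ZMod n) → Fin m → ℝ :=
  fun x r => ∑ y, ∑ s, K (x - y) r s * φ y s

/-- Discrete forward derivative of a matrix-valued kernel. -/
def kDeriv {d m : ℕ} (n : ℕ) (j : Fin d) (K : (Fin d → ZMod n) → Fin m → Fin m → ℝ) :
    (Fin d → ZMod n) → Fin m → Fin m → ℝ :=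
  fun x r s => K (x + unitVec d n j) r s - K x r s

/-- The iterated discrete derivative `∇^α = ∏_i ∇_i^{α_i}` of a matrix-valued kernel. -/
def multiDeriv {d m : ℕ} (n : ℕ) (α : Fin d → ℕ)
    (K : (Fin d → ZMod n) → Fin m → Fin m → ℝ) : (Fin d → ZMod n) → Fin m → Fin m → ℝ :=
  (List.finRange d).foldr (fun j K' => (kDeriv n j)^[α j] K') K

/-- Operator norm of an `m × m` matrix (as operator on Euclidean space). -/
noncomputable def matOpNorm {m : ℕ} (M : Fin m → Fin m → ℝ) : ℝ :=
  ‖Matrix.toEuclideanCLM (𝕜 := ℝ) (Matrix.of M)‖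


-- zdist lemmas
lemma zdist_neg (n : ℕ) [NeZero n] (z : ZMod n) : zdist n (-z) = zdist n z := by
  unfold zdist
  rcases eq_or_ne z 0 with h | h
  · simp [h]
  · rw [ZMod.neg_val, if_neg h, Nat.sub_sub_self (ZMod.val_lt z).le, min_comm]

lemma zdist_add_le (n : ℕ) [NeZero n] (a b : ZMod n) :
    zdist n (a + b) ≤ zdist n a + zdist n b := by
  unfold zdist
  have ha := ZMod.val_lt a
  have hb := ZMod.val_lt b
  have hab : (a + b).val = (a.val + b.val) % n := ZMod.val_add a b
  rcases lt_or_ge (a.val + b.val) n with h | h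
  · rw [Nat.mod_eq_of_lt h] at hab; omega
  · have h2 : a.val + b.val - n < n := by omega
    have : (a.val + b.val) % n = a.val + b.val - n := by
      rw [Nat.mod_eq_sub_mod h, Nat.mod_eq_of_lt h2]
    rw [this] at hab; omega

lemma distT_triangle {d : ℕ} (n : ℕ) [NeZero n] (u z w : Fin d → ZMod n) :
    distT n u w ≤ distT n u z + distT n z w := by
  unfold distT
  refine Finset.sup_le fun i _ => ?_
  have : u i - w i = (u i - z i) + (z i - w i) := by ring
  rw [this]
  exact le_trans (zdist_add_le n _ _)
    (Nat.add_le_add (Finset.le_sup (f := fun i => zdist n (u i - z i)) (Finset.mem_univ i))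
      (Finset.le_sup (f := fun i => zdist n (z i - w i)) (Finset.mem_univ i)))

lemma distT_self {d : ℕ} (n : ℕ) [NeZero n] (y : Fin d → ZMod n) : distT n y y = 0 := by
  simp [distT, zdist]

lemma distT_symm {d : ℕ} (n : ℕ) [NeZero n] (x y : Fin d → ZMod n) :
    distT n x y = distT n y x := by
  unfold distT
  congr 1; funext i
  rw [show x i - y i = -(y i - x i) by ring, zdist_neg]


lemma zdist_one (n : ℕ) [NeZero n] (hn : 2 ≤ n) : zdist n 1 = 1 := by
  unfold zdist
  rw [show (1 : ZMod n) = ((1:ℕ) : ZMod n) by simp, ZMod.val_natCast_of_lt (by omega)]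
  omega

/-- distance of two points differing by vectors with 0/1 entries is ≤ 1 -/
lemma distT_unit {d : ℕ} (n : ℕ) [NeZero n] (hn : 2 ≤ n) (y a b : Fin d → ZMod n)
    (ha : ∀ i, a i = 0 ∨ a i = 1) (hb : ∀ i, b i = 0 ∨ b i = 1) :
    distT n (y + a) (y + b) ≤ 1 := by
  refine Finset.sup_le fun i _ => ?_
  have : (y + a) i - (y + b) i = a i - b i := by simp
  rw [this]
  rcases ha i with h1 | h1 <;> rcases hb i with h2 | h2 <;> rw [h1, h2]
  · simp [zdist]
  · rw [show (0 : ZMod n) - 1 = -1 by ring, zdist_neg, zdist_one n hn]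
  · rw [sub_zero, zdist_one n hn]
  · simp [zdist]

lemma zdist_natCast_le (n : ℕ) [NeZero n] (k : ℕ) (hk : k < n) : zdist n (k : ZMod n) ≤ k := by
  unfold zdist
  rw [ZMod.val_natCast_of_lt hk]
  omega

/-- diameter of the box `{1,…,l-1}^d`: two points whose difference from `x` lies in the box
are at distance at most `l-2`. -/
lemma distT_box {d : ℕ} (n l : ℕ) [NeZero n] (hl : 3 ≤ l) (hln : l - 1 < n)
    (x u w : Fin d → ZMod n) (hu : u - x ∈ box d n 1 (l-1)) (hw : w - x ∈ box d n 1 (l-1)) :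
    distT n u w ≤ l - 2 := by
  refine Finset.sup_le fun i _ => ?_
  obtain ⟨k, hk1, hk2, hk3⟩ := hu i
  obtain ⟨k', hk1', hk2', hk3'⟩ := hw i
  have : u i - w i = (u - x) i - (w - x) i := by simp
  rw [this, hk3, hk3']
  rcases le_total k' k with h | h
  · rw [show ((k:ZMod n) - k') = ((k - k' : ℕ) : ZMod n) by push_cast [h]; ring]
    exact le_trans (zdist_natCast_le n _ (by omega)) (by omega)
  · rw [show ((k:ZMod n) - (k':ZMod n)) = -((k' - k : ℕ) : ZMod n) by push_cast [h]; ring,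
      zdist_neg]
    exact le_trans (zdist_natCast_le n _ (by omega)) (by omega)



lemma sum_translate {d n : ℕ} [NeZero n] (f : (Fin d → ZMod n) → ℝ) (u : Fin d → ZMod n) :
    ∑ x, f (x - u) = ∑ x, f x := by
  exact Equiv.sum_comp (Equiv.subRight u) f

lemma pairV_comm {d m n : ℕ} [NeZero n] (φ ψ : (Fin d → ZMod n) → Fin m → ℝ) :
    pairV n φ ψ = pairV n ψ φ := by
  unfold pairV; congr 1; funext x; congr 1; funext r; ring

lemma byParts {d m n : ℕ} [NeZero n] (A : Fin m × Fin d → Fin m × Fin d → ℝ)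
    (g χ : (Fin d → ZMod n) → Fin m → ℝ) :
    pairV n (opA n A g) χ = plusForm n A g χ := by
  unfold pairV plusForm opA ginner
  have key : ∀ j : Fin d, ∀ r : Fin m,
      ∑ x, appA A (dGrad n g (x - unitVec d n j)) r j * χ x r
        = ∑ x, appA A (dGrad n g x) r j * χ (x + unitVec d n j) r := by
    intro j r
    have := sum_translate (f := fun x => appA A (dGrad n g x) r j * χ (x + unitVec d n j) r)
      (unitVec d n j)
    rw [← this]
    apply Finset.sum_congr rfl
    intro x _
    rw [sub_add_cancel]
  calc ∑ x, ∑ r, (∑ j, (appA A (dGrad n g (x - unitVec d n j)) r j - appA A (dGrad n g x) r j)) * χ x r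
      = ∑ x, ∑ r, ∑ j, (appA A (dGrad n g (x - unitVec d n j)) r j * χ x r
          - appA A (dGrad n g x) r j * χ x r) := by
        apply Finset.sum_congr rfl; intro x _; apply Finset.sum_congr rfl; intro r _
        rw [Finset.sum_mul]; apply Finset.sum_congr rfl; intro j _; ring
    _ = ∑ r, ∑ j, ∑ x, (appA A (dGrad n g (x - unitVec d n j)) r j * χ x r
          - appA A (dGrad n g x) r j * χ x r) := by
        rw [Finset.sum_comm]; apply Finset.sum_congr rfl; intro r _; rw [Finset.sum_comm]
    _ = ∑ r, ∑ j, ∑ x, appA A (dGrad n g x) r j * (χ (x + unitVec d n j) r - χ x r) := by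
        apply Finset.sum_congr rfl; intro r _; apply Finset.sum_congr rfl; intro j _
        rw [Finset.sum_sub_distrib, key j r, ← Finset.sum_sub_distrib]
        apply Finset.sum_congr rfl; intro x _; ring
    _ = ∑ x, ∑ r, ∑ j, appA A (dGrad n g x) r j * (χ (x + unitVec d n j) r - χ x r) := by
        rw [show (∑ r : Fin m, ∑ j : Fin d, ∑ x, appA A (dGrad n g x) r j
              * (χ (x + unitVec d n j) r - χ x r))
            = ∑ r : Fin m, ∑ x, ∑ j : Fin d, appA A (dGrad n g x) r j
              * (χ (x + unitVec d n j) r - χ x r) from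
            Finset.sum_congr rfl fun r _ => Finset.sum_comm, Finset.sum_comm]
    _ = ∑ x, ∑ r, ∑ j, appA A (dGrad n g x) r j * dGrad n χ x r j := rfl

lemma ginner_swapA {d m : ℕ} (A : Fin m × Fin d → Fin m × Fin d → ℝ)
    (hAsym : ∀ p q, A p q = A q p) (F G : Fin m → Fin d → ℝ) :
    ginner (appA A F) G = ginner (appA A G) F := by
  have h : ∀ (F G : Fin m → Fin d → ℝ), ginner (appA A F) G
      = ∑ q : Fin m × Fin d, ∑ p : Fin m × Fin d, A q p * F p.1 p.2 * G q.1 q.2 := by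
    intro F G
    unfold ginner appA
    rw [show (∑ q : Fin m × Fin d, ∑ p : Fin m × Fin d, A q p * F p.1 p.2 * G q.1 q.2)
        = ∑ r, ∑ j, ∑ p : Fin m × Fin d, A (r, j) p * F p.1 p.2 * G r j from
        Fintype.sum_prod_type _]
    apply Finset.sum_congr rfl; intro r _; apply Finset.sum_congr rfl; intro j _
    rw [Finset.sum_mul]
  rw [h, h, Finset.sum_comm]
  apply Finset.sum_congr rfl; intro q _; apply Finset.sum_congr rfl; intro p _
  rw [hAsym q p]; ring

lemma plusForm_comm {d m n : ℕ} [NeZero n] (A : Fin m × Fin d → Fin m × Fin d → ℝ)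
    (hAsym : ∀ p q, A p q = A q p) (φ ψ : (Fin d → ZMod n) → Fin m → ℝ) :
    plusForm n A φ ψ = plusForm n A ψ φ := by
  unfold plusForm
  exact Finset.sum_congr rfl fun x _ => ginner_swapA A hAsym _ _

lemma ginner_self_nonneg {d m : ℕ} (F : Fin m → Fin d → ℝ) : 0 ≤ ginner F F :=
  Finset.sum_nonneg fun r _ => Finset.sum_nonneg fun j _ => mul_self_nonneg _

lemma vec_decomp {d n : ℕ} (v : Fin d → ZMod n) :
    v = ∑ i, v i • unitVec d n i := by
  funext j
  rw [Finset.sum_apply]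
  simp only [Pi.smul_apply, unitVec, smul_eq_mul, mul_ite, mul_one, mul_zero]
  rw [Finset.sum_ite_eq Finset.univ j v]
  simp

lemma const_of_step {d n : ℕ} [NeZero n] {β : Type*}
    (f : (Fin d → ZMod n) → β)
    (hstep : ∀ y j, f (y + unitVec d n j) = f y) (y z : Fin d → ZMod n) : f y = f z := by
  have hnat : ∀ (k : ℕ) (j : Fin d) (y : Fin d → ZMod n),
      f (y + (k : ZMod n) • unitVec d n j) = f y := by
    intro k
    induction k with
    | zero => intro j y; simp
    | succ k ih =>
      intro j y
      have : y + ((k+1 : ℕ) : ZMod n) • unitVec d n j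
          = (y + unitVec d n j) + (k : ZMod n) • unitVec d n j := by
        push_cast
        rw [add_smul, one_smul]
        abel
      rw [this, ih, hstep]
  have hc : ∀ (c : ZMod n) (j : Fin d) (y : Fin d → ZMod n),
      f (y + c • unitVec d n j) = f y := by
    intro c j y
    rw [← ZMod.natCast_rightInverse c]
    exact hnat c.val j y
  have hsum : ∀ (s : Finset (Fin d)) (v : Fin d → ZMod n) (y : Fin d → ZMod n),
      f (y + ∑ i ∈ s, v i • unitVec d n i) = f y := by
    intro s
    induction s using Finset.induction_on with
    | empty => intro v y; simp
    | insert _ _ hns ih =>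
      intro v y
      rw [Finset.sum_insert hns, show y + (v _ • unitVec d n _ + ∑ i ∈ _, v i • unitVec d n i)
        = (y + ∑ i ∈ _, v i • unitVec d n i) + v _ • unitVec d n _ by abel, hc, ih]
  have := hsum Finset.univ (z - y) y
  rw [← vec_decomp (z - y)] at this
  simp at this
  exact this.symm

section linearity
variable {d m n : ℕ} [NeZero n] {ι : Type*}

omit [NeZero n] in
lemma dGrad_smul_sum (c : ℝ) (s : Finset ι) (f : ι → ((Fin d → ZMod n) → Fin m → ℝ))
    (y : Fin d → ZMod n) :
    dGrad n (c • ∑ i ∈ s, f i) y = c • ∑ i ∈ s, dGrad n (f i) y := by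
  funext r j
  simp [dGrad, Finset.sum_apply, Finset.sum_sub_distrib, Finset.mul_sum, mul_sub]

lemma appA_smul_sum (A : Fin m × Fin d → Fin m × Fin d → ℝ) (c : ℝ) (s : Finset ι)
    (F : ι → (Fin m → Fin d → ℝ)) :
    appA A (c • ∑ i ∈ s, F i) = c • ∑ i ∈ s, appA A (F i) := by
  funext r j
  simp only [appA, Pi.smul_apply, Finset.sum_apply, smul_eq_mul, Finset.mul_sum]
  rw [Finset.sum_comm]
  apply Finset.sum_congr rfl; intro i _; apply Finset.sum_congr rfl; intro p _; ring

lemma swap_out {α β : Type*} [Fintype α] [Fintype β] (s : Finset ι) (g : ι → α → β → ℝ) :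
    ∑ x : α, ∑ r : β, ∑ i ∈ s, g i x r = ∑ i ∈ s, ∑ x, ∑ r, g i x r := by
  rw [show (∑ x : α, ∑ r : β, ∑ i ∈ s, g i x r) = ∑ x : α, ∑ i ∈ s, ∑ r : β, g i x r from
    Finset.sum_congr rfl fun x _ => Finset.sum_comm, Finset.sum_comm]

lemma mul_sum2 {α β : Type*} [Fintype α] [Fintype β] (c : ℝ) (g : α → β → ℝ) :
    ∑ x : α, ∑ r : β, c * g x r = c * ∑ x, ∑ r, g x r := by
  simp [Finset.mul_sum]

lemma smulsum_helper {α β : Type*} [Fintype α] [Fintype β] (c : ℝ) (s : Finset ι)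
    (a : ι → α → β → ℝ) (b : α → β → ℝ) :
    ∑ x : α, ∑ r : β, (c * ∑ i ∈ s, a i x r) * b x r
      = c * ∑ i ∈ s, ∑ x, ∑ r, a i x r * b x r := by
  calc ∑ x : α, ∑ r : β, (c * ∑ i ∈ s, a i x r) * b x r
      = ∑ x : α, ∑ r : β, ∑ i ∈ s, c * (a i x r * b x r) := by
        apply Finset.sum_congr rfl; intro x _; apply Finset.sum_congr rfl; intro r _
        rw [mul_assoc, Finset.sum_mul, Finset.mul_sum]
    _ = ∑ i ∈ s, ∑ x, ∑ r, c * (a i x r * b x r) := swap_out s _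
    _ = c * ∑ i ∈ s, ∑ x, ∑ r, a i x r * b x r := by
        rw [Finset.mul_sum]; exact Finset.sum_congr rfl fun i _ => mul_sum2 c _

omit [NeZero n] in
lemma ginner_smul_sum_left (c : ℝ) (s : Finset ι) (F : ι → (Fin m → Fin d → ℝ))
    (G : Fin m → Fin d → ℝ) :
    ginner (c • ∑ i ∈ s, F i) G = c * ∑ i ∈ s, ginner (F i) G := by
  unfold ginner
  simp only [Pi.smul_apply, Finset.sum_apply, smul_eq_mul]
  exact smulsum_helper c s (fun i r j => F i r j) G

omit [NeZero n] in
lemma ginner_smul_sum_right (c : ℝ) (s : Finset ι) (G : ι → (Fin m → Fin d → ℝ))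
    (F : Fin m → Fin d → ℝ) :
    ginner F (c • ∑ i ∈ s, G i) = c * ∑ i ∈ s, ginner F (G i) := by
  unfold ginner
  simp only [Pi.smul_apply, Finset.sum_apply, smul_eq_mul]
  rw [show (∑ r, ∑ j, F r j * (c * ∑ i ∈ s, G i r j))
      = ∑ r, ∑ j, (c * ∑ i ∈ s, G i r j) * F r j from
    Finset.sum_congr rfl fun r _ => Finset.sum_congr rfl fun j _ => mul_comm _ _,
    smulsum_helper c s (fun i r j => G i r j) F]
  congr 1
  apply Finset.sum_congr rfl; intro i _
  apply Finset.sum_congr rfl; intro r _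
  apply Finset.sum_congr rfl; intro j _
  ring

lemma pairV_smul_sum (c : ℝ) (s : Finset ι) (f : ι → ((Fin d → ZMod n) → Fin m → ℝ))
    (ψ : (Fin d → ZMod n) → Fin m → ℝ) :
    pairV n (c • ∑ i ∈ s, f i) ψ = c * ∑ i ∈ s, pairV n (f i) ψ := by
  unfold pairV
  simp only [Pi.smul_apply, Finset.sum_apply, smul_eq_mul]
  exact smulsum_helper c s (fun i x r => f i x r) (fun x r => ψ x r)

lemma plusForm_smul_sum_left (A : Fin m × Fin d → Fin m × Fin d → ℝ) (c : ℝ) (s : Finset ι)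
    (f : ι → ((Fin d → ZMod n) → Fin m → ℝ)) (ψ : (Fin d → ZMod n) → Fin m → ℝ) :
    plusForm n A (c • ∑ i ∈ s, f i) ψ = c * ∑ i ∈ s, plusForm n A (f i) ψ := by
  unfold plusForm
  rw [show (∑ x, ginner (appA A (dGrad n (c • ∑ i ∈ s, f i) x)) (dGrad n ψ x))
      = ∑ x, c * ∑ i ∈ s, ginner (appA A (dGrad n (f i) x)) (dGrad n ψ x) from
    Finset.sum_congr rfl fun x _ => by
      rw [dGrad_smul_sum, appA_smul_sum, ginner_smul_sum_left],
    ← Finset.mul_sum, Finset.sum_comm]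

lemma plusForm_smul_sum_right (A : Fin m × Fin d → Fin m × Fin d → ℝ) (c : ℝ) (s : Finset ι)
    (g : (Fin d → ZMod n) → Fin m → ℝ) (f : ι → ((Fin d → ZMod n) → Fin m → ℝ)) :
    plusForm n A g (c • ∑ i ∈ s, f i) = c * ∑ i ∈ s, plusForm n A g (f i) := by
  unfold plusForm
  rw [show (∑ x, ginner (appA A (dGrad n g x)) (dGrad n (c • ∑ i ∈ s, f i) x))
      = ∑ x, c * ∑ i ∈ s, ginner (appA A (dGrad n g x)) (dGrad n (f i) x) from
    Finset.sum_congr rfl fun x _ => by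
      rw [dGrad_smul_sum, ginner_smul_sum_right],
    ← Finset.mul_sum, Finset.sum_comm]

end linearity



lemma zero_not_box {d n l : ℕ} [NeZero n] (hd : 1 ≤ d) (hln : l - 1 < n) :
    (0 : Fin d → ZMod n) ∉ box d n 1 (l - 1) := by
  intro h
  obtain ⟨k, h1, h2, h3⟩ := h ⟨0, hd⟩
  have : ((k : ZMod n)).val = k := ZMod.val_natCast_of_lt (by omega)
  rw [← h3] at this
  simp [ZMod.val_zero] at this
  omega

lemma proj_pair_zero {d m n l : ℕ} [NeZero n] (hd : 1 ≤ d) (hl : 3 ≤ l) (hln : l - 1 < n)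
    (c0 : ℝ) (hc0 : 0 < c0)
    (A : Fin m × Fin d → Fin m × Fin d → ℝ)
    (hApos : ∀ F : Fin m → Fin d → ℝ, c0 * ginner F F ≤ ginner (appA A F) F)
    (P : ((Fin d → ZMod n) → Fin m → ℝ) → (Fin d → ZMod n) → Fin m → ℝ)
    (x : Fin d → ZMod n) (hP : IsProj n A l x P)
    (φ ψ : (Fin d → ZMod n) → Fin m → ℝ) (hφ : MeanZero n φ)
    (hfar : ∀ u, φ u ≠ 0 → ∀ w, ψ w ≠ 0 → l - 1 < distT n u w) :
    pairV n (P φ) ψ = 0 := by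
  have hn3 : 3 ≤ n := by omega
  obtain ⟨hmean, hsupp, hform⟩ := hP φ hφ
  by_cases hw : ∃ w, (w - x ∈ box d n 1 (l - 1)) ∧ ψ w ≠ 0
  · -- ψ touches the box, hence φ is far from the box and `P φ = 0`
    obtain ⟨w, hwbox, hwne⟩ := hw
    have hgrad0 : ∀ y, dGrad n φ y = 0 ∨ dGrad n (P φ) y = 0 := by
      intro y
      by_contra hcon
      push_neg at hcon
      obtain ⟨h1, h2⟩ := hcon
      rw [Function.ne_iff] at h1 h2
      obtain ⟨r, h1⟩ := h1
      obtain ⟨r', h2⟩ := h2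
      rw [Function.ne_iff] at h1 h2
      obtain ⟨j, h1⟩ := h1
      obtain ⟨j', h2⟩ := h2
      simp only [Pi.zero_apply, dGrad] at h1 h2
      obtain ⟨a, ha01, hau⟩ : ∃ a, (∀ i, a i = 0 ∨ a i = 1) ∧ φ (y + a) ≠ 0 := by
        rcases ne_or_eq (φ (y + unitVec d n j)) 0 with h | h
        · exact ⟨unitVec d n j, fun i => by unfold unitVec; split <;> simp, h⟩
        · refine ⟨0, fun i => Or.inl rfl, by
            rw [add_zero]
            intro h0
            rw [h, h0] at h1
            simp at h1⟩
      obtain ⟨b, hb01, hbu⟩ : ∃ b, (∀ i, b i = 0 ∨ b i = 1) ∧ P φ (y + b) ≠ 0 := by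
        rcases ne_or_eq (P φ (y + unitVec d n j')) 0 with h | h
        · exact ⟨unitVec d n j', fun i => by unfold unitVec; split <;> simp, h⟩
        · refine ⟨0, fun i => Or.inl rfl, by
            rw [add_zero]
            intro h0
            rw [h, h0] at h2
            simp at h2⟩
      have hbox : (y + b) - x ∈ box d n 1 (l - 1) := by
        by_contra hc
        exact hbu (hsupp _ hc)
      have hfaru := hfar (y + a) hau w hwne
      have htri := distT_triangle n (y + a) (y + b) w
      have hd1 := distT_unit n (by omega) y a b ha01 hb01
      have hd2 := distT_box n l hl hln x (y + b) w hbox hwbox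
      omega
    have hform0 : plusForm n A φ (P φ) = 0 := by
      refine Finset.sum_eq_zero fun y _ => ?_
      rcases hgrad0 y with h | h <;> rw [h] <;> simp [appA, ginner]
    have hPP : plusForm n A (P φ) (P φ) = 0 := by
      rw [hform (P φ) hmean hsupp]
      exact hform0
    have hz : ∀ y, dGrad n (P φ) y = 0 := by
      have h0 : 0 ≤ ∑ y, ginner (dGrad n (P φ) y) (dGrad n (P φ) y) :=
        Finset.sum_nonneg fun y _ => ginner_self_nonneg _
      have hle : c0 * ∑ y, ginner (dGrad n (P φ) y) (dGrad n (P φ) y) ≤ 0 := by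
        rw [Finset.mul_sum, ← hPP]
        exact Finset.sum_le_sum fun y _ => hApos _
      have hsum : ∑ y, ginner (dGrad n (P φ) y) (dGrad n (P φ) y) = 0 := by nlinarith
      intro y
      have hy0 : ginner (dGrad n (P φ) y) (dGrad n (P φ) y) = 0 :=
        (Finset.sum_eq_zero_iff_of_nonneg (fun y _ => ginner_self_nonneg _)).1 hsum y
          (Finset.mem_univ y)
      funext r j
      have hr0 : ∑ j, dGrad n (P φ) y r j * dGrad n (P φ) y r j = 0 :=
        (Finset.sum_eq_zero_iff_of_nonneg (fun r _ =>
          Finset.sum_nonneg fun j _ => mul_self_nonneg _)).1 hy0 r (Finset.mem_univ r)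
      have := (Finset.sum_eq_zero_iff_of_nonneg (fun j _ => mul_self_nonneg _)).1 hr0 j
        (Finset.mem_univ j)
      simpa [mul_self_eq_zero] using this
    have hconst : ∀ y, P φ y = P φ x := fun y =>
      const_of_step (P φ) (fun y' j => funext fun r => by
        have := congrFun (congrFun (hz y') r) j
        simp only [dGrad, Pi.zero_apply] at this
        linarith) y x
    have hx0 : P φ x = 0 := by
      apply hsupp
      rw [sub_self]
      exact zero_not_box hd hln
    refine Finset.sum_eq_zero fun y _ => Finset.sum_eq_zero fun r _ => ?_
    rw [hconst y, hx0]
    simp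
  · -- ψ vanishes on the box
    push_neg at hw
    refine Finset.sum_eq_zero fun y _ => ?_
    by_cases hy : y - x ∈ box d n 1 (l - 1)
    · refine Finset.sum_eq_zero fun r _ => ?_
      rw [hw y hy]
      simp
    · refine Finset.sum_eq_zero fun r _ => ?_
      rw [hsupp y hy]
      simp

lemma pairV_sub_left {d m n : ℕ} [NeZero n] (f g ψ : (Fin d → ZMod n) → Fin m → ℝ) :
    pairV n (fun y => f y - g y) ψ = pairV n f ψ - pairV n g ψ := by
  unfold pairV
  rw [← Finset.sum_sub_distrib]
  apply Finset.sum_congr rfl; intro y _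
  rw [← Finset.sum_sub_distrib]
  apply Finset.sum_congr rfl; intro r _
  simp [sub_mul]

lemma proj_adjoint {d m n l : ℕ} [NeZero n] (A : Fin m × Fin d → Fin m × Fin d → ℝ)
    (hAsym : ∀ p q, A p q = A q p)
    (P : ((Fin d → ZMod n) → Fin m → ℝ) → (Fin d → ZMod n) → Fin m → ℝ)
    (x : Fin d → ZMod n) (hP : IsProj n A l x P)
    (g ψ : (Fin d → ZMod n) → Fin m → ℝ) (hg : MeanZero n g) (hψ : MeanZero n ψ) :
    plusForm n A (P g) ψ = plusForm n A g (P ψ) := by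
  obtain ⟨hmg, hsg, hfg⟩ := hP g hg
  obtain ⟨hmψ, hsψ, hfψ⟩ := hP ψ hψ
  calc plusForm n A (P g) ψ = plusForm n A ψ (P g) := plusForm_comm A hAsym _ _
    _ = plusForm n A (P ψ) (P g) := (hfψ (P g) hmg hsg).symm
    _ = plusForm n A (P g) (P ψ) := plusForm_comm A hAsym _ _
    _ = plusForm n A g (P ψ) := hfg (P ψ) hmψ hsψ

set_option maxHeartbeats 1000000 in
/-- **Lemma 3.7**: if `dist_∞(supp φ, supp ψ) > l-1` then
`⟨𝒯φ,ψ⟩ = ⟨𝒯'φ,ψ⟩ = ⟨𝓡φ,ψ⟩ = ⟨𝓡'φ,ψ⟩ = 0`, where `𝒯' = 𝒜 𝒯 𝒜⁻¹`, `𝓡 = id - 𝒯`,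
`𝓡' = id - 𝒯'`. -/
theorem statement14
    (d m L N l : ℕ) (hd : 1 ≤ d) (hm : 1 ≤ m) (hLodd : Odd L) (hL : 3 ≤ L) (hN : 1 ≤ N)
    [NeZero (L ^ N)] (hl : 3 ≤ l) (hlN : l - 1 < L ^ N)
    (c0 : ℝ) (hc0 : 0 < c0)
    (A : Fin m × Fin d → Fin m × Fin d → ℝ)
    (hAsym : ∀ p q, A p q = A q p)
    (hApos : ∀ F : Fin m → Fin d → ℝ, c0 * ginner F F ≤ ginner (appA A F) F)
    (Pix : (Fin d → ZMod (L ^ N)) →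
      ((Fin d → ZMod (L ^ N)) → Fin m → ℝ) → (Fin d → ZMod (L ^ N)) → Fin m → ℝ)
    (hPix : ∀ x, IsProj (L ^ N) A l x (Pix x))
    -- `Cop = 𝒜⁻¹` is the inverse of `𝒜` on `𝒳_N`
    (Cop : ((Fin d → ZMod (L ^ N)) → Fin m → ℝ) → (Fin d → ZMod (L ^ N)) → Fin m → ℝ)
    (hCop : ∀ φ, MeanZero (L ^ N) φ →
      MeanZero (L ^ N) (Cop φ) ∧ opA (L ^ N) A (Cop φ) = φ ∧ Cop (opA (L ^ N) A φ) = φ)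
    (φ ψ : (Fin d → ZMod (L ^ N)) → Fin m → ℝ)
    (hφ : MeanZero (L ^ N) φ) (hψ : MeanZero (L ^ N) ψ)
    (hfar : ∀ x, φ x ≠ 0 → ∀ y, ψ y ≠ 0 → l - 1 < distT (L ^ N) x y) :
    pairV (L ^ N) (Tavg (L ^ N) l Pix φ) ψ = 0 ∧
    pairV (L ^ N) (opA (L ^ N) A (Tavg (L ^ N) l Pix (Cop φ))) ψ = 0 ∧
    pairV (L ^ N) (fun y => φ y - Tavg (L ^ N) l Pix φ y) ψ = 0 ∧
    pairV (L ^ N) (fun y => φ y - opA (L ^ N) A (Tavg (L ^ N) l Pix (Cop φ)) y) ψ = 0 := by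

  -- the pairing of φ and ψ themselves vanishes
  have hdisj : pairV (L ^ N) φ ψ = 0 := by
    refine Finset.sum_eq_zero fun y _ => ?_
    rcases ne_or_eq (φ y) 0 with h | h
    · rcases ne_or_eq (ψ y) 0 with h2 | h2
      · exfalso
        have := hfar y h y h2
        rw [distT_self] at this
        omega
      · exact Finset.sum_eq_zero fun r _ => by rw [h2]; simp
    · exact Finset.sum_eq_zero fun r _ => by rw [h]; simp
  have key1 : ∀ x, pairV (L ^ N) (Pix x φ) ψ = 0 := fun x =>
    proj_pair_zero hd hl hlN c0 hc0 A hApos (Pix x) x (hPix x) φ ψ hφ hfar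
  have hfar' : ∀ u, ψ u ≠ 0 → ∀ w, φ w ≠ 0 → l - 1 < distT (L ^ N) u w := fun u hu w hw => by
    rw [distT_symm]; exact hfar w hw u hu
  have key2 : ∀ x, pairV (L ^ N) (Pix x ψ) φ = 0 := fun x =>
    proj_pair_zero hd hl hlN c0 hc0 A hApos (Pix x) x (hPix x) ψ φ hψ hfar'
  have c1 : pairV (L ^ N) (Tavg (L ^ N) l Pix φ) ψ = 0 := by
    unfold Tavg
    rw [pairV_smul_sum]
    simp [key1]
  obtain ⟨hg0m, hg0A, -⟩ := hCop φ hφ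
  have c2 : pairV (L ^ N) (opA (L ^ N) A (Tavg (L ^ N) l Pix (Cop φ))) ψ = 0 := by
    calc pairV (L ^ N) (opA (L ^ N) A (Tavg (L ^ N) l Pix (Cop φ))) ψ
        = plusForm (L ^ N) A (Tavg (L ^ N) l Pix (Cop φ)) ψ := byParts A _ ψ
      _ = ((l : ℝ) ^ d)⁻¹ * ∑ x, plusForm (L ^ N) A (Pix x (Cop φ)) ψ := by
          unfold Tavg; rw [plusForm_smul_sum_left]
      _ = ((l : ℝ) ^ d)⁻¹ * ∑ x, plusForm (L ^ N) A (Cop φ) (Pix x ψ) := by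
          congr 1
          exact Finset.sum_congr rfl fun x _ =>
            proj_adjoint A hAsym (Pix x) x (hPix x) (Cop φ) ψ hg0m hψ
      _ = plusForm (L ^ N) A (Cop φ) (Tavg (L ^ N) l Pix ψ) := by
          unfold Tavg; rw [plusForm_smul_sum_right]
      _ = pairV (L ^ N) (opA (L ^ N) A (Cop φ)) (Tavg (L ^ N) l Pix ψ) := (byParts A _ _).symm
      _ = pairV (L ^ N) φ (Tavg (L ^ N) l Pix ψ) := by rw [hg0A]
      _ = pairV (L ^ N) (Tavg (L ^ N) l Pix ψ) φ := pairV_comm _ _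
      _ = 0 := by unfold Tavg; rw [pairV_smul_sum]; simp [key2]
  refine ⟨c1, c2, ?_, ?_⟩
  · rw [pairV_sub_left, hdisj, c1, sub_zero]
  · rw [pairV_sub_left, hdisj, c2, sub_zero]


end FRD
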